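/- For n = 2, among arcs S of the unit circle of angular length between π/2 and π (so that S ⊇ S*) and unit vectors u ∈ S*, the minimum of Φ(S,u) = (1/π) ∫_S ⟨θ, u⟩ dσ(θ) equals 1/π, attained exactly when S is an arc of length π/2 and u is one of its endpoints. -/

import Mathlib

open RealInnerProductSpace Set MeasureTheory
open Real

set_option maxHeartbeats 1600000

/-- The point of the unit circle at angle `θ`. -/
noncomputable def circlePt (θ : ℝ) : EuclideanSpace ℝ (Fin 2) :=
  (WithLp.equiv 2 (Fin 2 → ℝ)).symm ![Real.cos θ, Real.sin θ]

/-- The arc of the unit circle between angles `ϑ₁` and `ϑ₂`. -/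
noncomputable def circleArc (ϑ₁ ϑ₂ : ℝ) : Set (EuclideanSpace ℝ (Fin 2)) :=
  circlePt '' Icc ϑ₁ ϑ₂

/-- `Φ(S,u) = (1/π) ∫_S ⟨θ, u⟩ dσ(θ)` for `n = 2` (`ω₂ = 2π`). -/
noncomputable def PhiArc (S : Set (EuclideanSpace ℝ (Fin 2)))
    (u : EuclideanSpace ℝ (Fin 2)) : ℝ :=
  1 / Real.pi * ∫ θ in S, ⟪θ, u⟫ ∂(μH[(1 : ℝ)])

lemma circlePt_def (t : ℝ) :
    circlePt t = (WithLp.equiv 2 (Fin 2 → ℝ)).symm ![Real.cos t, Real.sin t] := rfl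



lemma circlePt_apply0 (t : ℝ) : circlePt t 0 = Real.cos t := rfl
lemma circlePt_apply1 (t : ℝ) : circlePt t 1 = Real.sin t := rfl

lemma inner_circlePt (s t : ℝ) : ⟪circlePt s, circlePt t⟫ = Real.cos (s - t) := by
  simp [circlePt, PiLp.inner_apply, Fin.sum_univ_two, Real.cos_sub, mul_comm]

lemma dist_circlePt (s t : ℝ) : dist (circlePt s) (circlePt t) ≤ |s - t| := by
  rw [EuclideanSpace.dist_eq]
  have h1 := Real.sin_sq_add_cos_sq (s)
  have h2 := Real.sin_sq_add_cos_sq (t)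
  have h3 := Real.cos_sub s t
  have h4 : 1 - (s-t)^2/2 ≤ Real.cos (s - t) := Real.one_sub_sq_div_two_le_cos
  have : Real.sqrt ((s-t)^2) = |s - t| := Real.sqrt_sq_eq_abs _
  rw [← this]
  apply Real.sqrt_le_sqrt
  simp [circlePt, Fin.sum_univ_two, Real.dist_eq, sq_abs]
  nlinarith [h1, h2, h3, h4]

lemma lipschitz_circlePt : LipschitzWith 1 circlePt := by
  apply LipschitzWith.of_dist_le_mul
  intro x y
  simpa [Real.dist_eq] using dist_circlePt x y

lemma norm_circlePt (t : ℝ) : ‖circlePt t‖ = 1 := by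
  have : ‖circlePt t‖^2 = 1 := by
    rw [← real_inner_self_eq_norm_sq, inner_circlePt]
    simp
  nlinarith [norm_nonneg (circlePt t)]


lemma continuous_circlePt : Continuous circlePt := lipschitz_circlePt.continuous

lemma circlePt_injOn {a b : ℝ} (hba : b - a < 2 * π) : InjOn circlePt (Icc a b) := by
  intro s hs t ht h
  have h1 : Real.cos (s - t) = 1 := by
    rw [← inner_circlePt, h]
    rw [inner_circlePt t t]
    simp
  have h2 : s - t = 0 := by
    refine (Real.cos_eq_one_iff_of_lt_of_lt ?_ ?_).mp h1
    · simp only [mem_Icc] at hs ht; linarith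
    · simp only [mem_Icc] at hs ht; linarith
  linarith

lemma lipschitz_inner_right (v : EuclideanSpace ℝ (Fin 2)) (hv : ‖v‖ = 1) :
    LipschitzWith 1 (fun x : EuclideanSpace ℝ (Fin 2) => ⟪x, v⟫) := by
  apply LipschitzWith.of_dist_le_mul
  intro x y
  rw [Real.dist_eq, ← inner_sub_left]
  calc |⟪x - y, v⟫| ≤ ‖x - y‖ * ‖v‖ := abs_real_inner_le_norm _ _
  _ = 1 * dist x y := by rw [hv, dist_eq_norm]; ring

lemma measure_arc_le {a b : ℝ} (hab : a ≤ b) :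
    μH[(1:ℝ)] (circleArc a b) ≤ ENNReal.ofReal (b - a) := by
  have h := lipschitz_circlePt.hausdorffMeasure_image_le (zero_le_one) (Icc a b)
  rw [MeasureTheory.hausdorffMeasure_real, Real.volume_Icc] at h
  simpa [circleArc] using h

lemma le_measure_arc {c d : ℝ} (hcd : c ≤ d) (h2 : d - c ≤ π) :
    ENNReal.ofReal (2 * Real.sin ((d - c)/2)) ≤ μH[(1:ℝ)] (circleArc c d) := by
  set m := (c + d)/2 with hm
  set φ : EuclideanSpace ℝ (Fin 2) → ℝ := fun x => ⟪x, circlePt (m + π/2)⟫ with hφ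
  have hφc : ∀ t, φ (circlePt t) = Real.sin (t - m) := by
    intro t
    rw [hφ]; simp only
    rw [inner_circlePt]
    rw [show t - (m + π/2) = (t - m) - π/2 by ring, Real.cos_sub_pi_div_two]
  have hmono : MonotoneOn (fun t => Real.sin (t - m)) (Icc c d) := by
    intro x hx y hy hxy
    simp only [mem_Icc] at hx hy
    apply Real.sin_le_sin_of_le_of_le_pi_div_two (by simp [hm]; linarith) (by simp [hm]; linarith)
      (by linarith)
  have himg : (fun t => Real.sin (t - m)) '' Icc c d
      = Icc (Real.sin (c - m)) (Real.sin (d - m)) := by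
    apply Subset.antisymm
    · rintro _ ⟨t, ht, rfl⟩
      exact ⟨hmono (left_mem_Icc.2 hcd) ht ht.1, hmono ht (right_mem_Icc.2 hcd) ht.2⟩
    · exact intermediate_value_Icc hcd ((Real.continuous_sin.comp (continuous_id.sub continuous_const)).continuousOn)
  have key : volume (φ '' circleArc c d) ≤ μH[(1:ℝ)] (circleArc c d) := by
    have h := (lipschitz_inner_right _ (norm_circlePt (m + π/2))).hausdorffMeasure_image_le
      zero_le_one (circleArc c d)
    rw [ENNReal.coe_one, ENNReal.rpow_one, one_mul, MeasureTheory.hausdorffMeasure_real] at h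
    exact h
  have himg2 : φ '' circleArc c d = Icc (Real.sin (c - m)) (Real.sin (d - m)) := by
    rw [circleArc, image_image]
    simpa only [hφc] using himg
  rw [himg2] at key
  refine le_trans (le_of_eq ?_) key
  rw [Real.volume_Icc]
  congr 1
  have h1 : c - m = -((d-c)/2) := by rw [hm]; ring
  have h2 : d - m = (d-c)/2 := by rw [hm]; ring
  rw [h1, h2, Real.sin_neg]; ring


lemma isCompact_circleArc (a b : ℝ) : IsCompact (circleArc a b) :=
  (isCompact_Icc).image continuous_circlePt

lemma measurable_circleArc (a b : ℝ) : MeasurableSet (circleArc a b) :=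
  (isCompact_circleArc a b).isClosed.measurableSet

instance : NullSingletonClass (μH[(1:ℝ)] : Measure (EuclideanSpace ℝ (Fin 2))) :=
  Measure.nullSingletonClass_hausdorff _ one_pos

lemma nsum_le_measure_arc {a b : ℝ} (hab : a ≤ b) (h2 : b - a ≤ π) (n : ℕ) (hn : 0 < n) :
    ENNReal.ofReal (n * (2 * Real.sin ((b - a)/(2*n)))) ≤ μH[(1:ℝ)] (circleArc a b) := by
  have hπ : (0:ℝ) < π := Real.pi_pos
  set δ : ℝ := (b - a)/n with hδ
  have hδ0 : 0 ≤ δ := div_nonneg (by linarith) (by positivity)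
  set t : ℕ → ℝ := fun i => a + i * δ with ht
  have htmono : ∀ i j : ℕ, i ≤ j → t i ≤ t j := by
    intro i j hij
    simp only [ht]
    have : (i:ℝ) ≤ j := Nat.cast_le.2 hij
    nlinarith
  have htn : t n = b := by
    simp only [ht, hδ]
    field_simp
    ring
  have hrange : ∀ i : ℕ, i ≤ n → t i ∈ Icc a b := by
    intro i hi
    constructor
    · simpa [ht] using htmono 0 i (Nat.zero_le _)
    · rw [← htn]; exact htmono i n hi
  have hinj : InjOn circlePt (Icc a b) := circlePt_injOn (by linarith)
  -- open arcs
  set O : ℕ → Set (EuclideanSpace ℝ (Fin 2)) := fun i => circlePt '' Ioo (t i) (t (i+1)) with hO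
  have hOsub : ∀ i, i < n → Ioo (t i) (t (i+1)) ⊆ Icc a b := fun i hi =>
    (Ioo_subset_Icc_self).trans (Icc_subset_Icc (hrange i hi.le).1 (hrange (i+1) hi).2)
  have hOeq : ∀ i, i < n → O i = circleArc (t i) (t (i+1)) \ circlePt '' {t i, t (i+1)} := by
    intro i hi
    have : Ioo (t i) (t (i+1)) = Icc (t i) (t (i+1)) \ {t i, t (i+1)} := by
      ext x; simp only [mem_Ioo, mem_diff, mem_Icc, mem_insert_iff, mem_singleton_iff]
      constructor
      · rintro ⟨h1, h2⟩; exact ⟨⟨h1.le, h2.le⟩, by push_neg; constructor <;> intro h <;> simp [h] at h1 h2 ⊢ <;> linarith⟩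
      · rintro ⟨⟨h1, h2⟩, h3⟩; push_neg at h3; exact ⟨h1.lt_of_ne (Ne.symm h3.1), h2.lt_of_ne h3.2⟩
    rw [hO]; simp only
    rw [this, (hinj.mono (Icc_subset_Icc (hrange i hi.le).1 (hrange (i+1) hi).2)).image_diff]
    rw [circleArc]
    congr 1
    rw [inter_eq_self_of_subset_right]
    intro x hx
    simp only [mem_insert_iff, mem_singleton_iff] at hx
    rcases hx with rfl | rfl
    · exact ⟨le_refl _, htmono i (i+1) (Nat.le_succ _)⟩
    · exact ⟨htmono i (i+1) (Nat.le_succ _), le_refl _⟩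
  have hOmeas : ∀ i, i < n → MeasurableSet (O i) := by
    intro i hi
    rw [hOeq i hi]
    exact (measurable_circleArc _ _).diff ((finite_singleton _ |>.insert _ |>.image _).measurableSet)
  have hOμ : ∀ i, i < n → ENNReal.ofReal (2 * Real.sin (δ/2)) ≤ μH[(1:ℝ)] (O i) := by
    intro i hi
    rw [hOeq i hi]
    rw [measure_diff_null]
    · have e1 : t (i+1) - t i = δ := by simp [ht]; ring
      have := le_measure_arc (htmono i (i+1) (Nat.le_succ _))
        (by rw [e1]; calc δ ≤ b - a := by
                              rw [hδ]
                              apply div_le_self (by linarith)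
                              exact_mod_cast hn
                            _ ≤ π := h2)
      rw [e1] at this
      exact this
    · exact (((finite_singleton _).insert _).image _).countable.measure_zero _
  have hdisj : (↑(Finset.range n) : Set ℕ).PairwiseDisjoint O := by
    intro i hi j hj hij
    simp only [Finset.coe_range, mem_Iio] at hi hj
    refine Set.disjoint_left.2 ?_
    rintro x ⟨s, hs, rfl⟩ ⟨r, hr, hrx⟩
    have hsr : s = r := hinj (hOsub i hi hs) (hOsub j hj hr) hrx.symm
    subst hsr
    rcases lt_or_gt_of_ne hij with h | h
    · have : t (i+1) ≤ t j := htmono _ _ h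
      exact absurd (hs.2.trans_le (this.trans hr.1.le)) (lt_irrefl _)
    · have : t (j+1) ≤ t i := htmono _ _ h
      exact absurd (hr.2.trans_le (this.trans hs.1.le)) (lt_irrefl _)
  have hsum := measure_biUnion_finset (μ := μH[(1:ℝ)]) hdisj (fun i hi => hOmeas i (Finset.mem_range.1 hi))
  have hun : (⋃ i ∈ Finset.range n, O i) ⊆ circleArc a b := by
    refine iUnion₂_subset fun i hi => ?_
    exact image_mono (hOsub i (Finset.mem_range.1 hi))
  have hsin0 : 0 ≤ Real.sin (δ/2) := by
    apply Real.sin_nonneg_of_nonneg_of_le_pi (by linarith)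
    have : δ ≤ b - a := by
      rw [hδ]; apply div_le_self (by linarith); exact_mod_cast hn
    linarith
  calc ENNReal.ofReal (n * (2 * Real.sin ((b - a)/(2*n))))
      = ∑ _i ∈ Finset.range n, ENNReal.ofReal (2 * Real.sin (δ/2)) := by
        rw [Finset.sum_const, Finset.card_range, nsmul_eq_mul,
          ← ENNReal.ofReal_natCast n, ← ENNReal.ofReal_mul (by positivity)]
        congr 2
        rw [hδ]
        ring_nf
    _ ≤ ∑ i ∈ Finset.range n, μH[(1:ℝ)] (O i) :=
        Finset.sum_le_sum fun i hi => hOμ i (Finset.mem_range.1 hi)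
    _ = μH[(1:ℝ)] (⋃ i ∈ Finset.range n, O i) := hsum.symm
    _ ≤ μH[(1:ℝ)] (circleArc a b) := measure_mono hun


lemma measure_arc {a b : ℝ} (hab : a ≤ b) (h2 : b - a ≤ π) :
    μH[(1:ℝ)] (circleArc a b) = ENNReal.ofReal (b - a) := by
  refine le_antisymm (measure_arc_le hab) ?_
  set c := b - a with hc
  have hc0 : 0 ≤ c := by linarith
  rcases eq_or_lt_of_le hc0 with h0 | h0
  · simp [← h0]
  have hne : μH[(1:ℝ)] (circleArc a b) ≠ ⊤ :=
    ((measure_arc_le hab).trans_lt ENNReal.ofReal_lt_top).ne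
  set r := (μH[(1:ℝ)] (circleArc a b)).toReal with hr
  have hmain : c ≤ r := by
    refine le_of_forall_pos_le_add fun ε hε => ?_
    obtain ⟨n, hn⟩ := exists_nat_gt (max (max (c^3/(16*ε)) (c/2)) 1)
    have hn1 : (1:ℝ) < n := lt_of_le_of_lt (le_max_right _ _) hn
    have hn0r : (0:ℝ) < n := lt_trans one_pos hn1
    have hn0 : 0 < n := by exact_mod_cast hn0r
    have hnc : c/2 < n := lt_of_le_of_lt ((le_max_right _ _).trans (le_max_left _ _)) hn
    have hnε : c^3/(16*ε) < n := lt_of_le_of_lt ((le_max_left _ _).trans (le_max_left _ _)) hn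
    set x := c/(2*n) with hx
    have hx0 : 0 < x := by positivity
    have hx1 : x ≤ 1 := by
      rw [hx, div_le_one (by positivity)]; linarith
    have hsin : x - x^3/4 < Real.sin x := by
      have := Real.sin_gt_sub_cube hx0; nlinarith [pow_pos hx0 3]
    have hkey : c - ε ≤ (n:ℝ) * (2 * Real.sin x) := by
      have e1 : (n:ℝ) * (2 * x) = c := by rw [hx]; field_simp
      have e2 : c^3/(16*(n:ℝ)^2) ≤ ε := by
        rw [div_le_iff₀ (by positivity)]
        have : c^3 ≤ 16*ε*n := by
          rw [div_lt_iff₀ (by positivity)] at hnε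
          linarith
        nlinarith [sq_nonneg ((n:ℝ) - 1)]
      have e3 : (n:ℝ) * (2 * (x - x^3/4)) = c - c^3/(16*(n:ℝ)^2) := by
        rw [hx]; field_simp; ring
      nlinarith [hsin, (by positivity : (0:ℝ) < (n:ℝ))]
    have := nsum_le_measure_arc hab h2 n (by exact_mod_cast hn0)
    have h4 : ENNReal.ofReal ((n:ℝ) * (2 * Real.sin x)) ≤ ENNReal.ofReal r := by
      rw [ENNReal.ofReal_toReal hne]
      exact this
    have h5 : (n:ℝ) * (2 * Real.sin x) ≤ r :=
      (ENNReal.ofReal_le_ofReal_iff ENNReal.toReal_nonneg).1 h4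
    linarith
  calc ENNReal.ofReal c ≤ ENNReal.ofReal r := ENNReal.ofReal_le_ofReal hmain
    _ = μH[(1:ℝ)] (circleArc a b) := ENNReal.ofReal_toReal hne


noncomputable def angFun (m : ℝ) (x : EuclideanSpace ℝ (Fin 2)) : ℝ :=
  m + Complex.arg (((x 0 * Real.cos m + x 1 * Real.sin m : ℝ) : ℂ)
      + ((- x 0 * Real.sin m + x 1 * Real.cos m : ℝ) : ℂ) * Complex.I)

lemma measurable_angFun (m : ℝ) : Measurable (angFun m) := by
  apply Measurable.const_add
  apply Complex.measurable_arg.comp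
  have h0 : Continuous fun x : EuclideanSpace ℝ (Fin 2) => x 0 :=
    (EuclideanSpace.proj (0 : Fin 2) : EuclideanSpace ℝ (Fin 2) →L[ℝ] ℝ).continuous
  have h1 : Continuous fun x : EuclideanSpace ℝ (Fin 2) => x 1 :=
    (EuclideanSpace.proj (1 : Fin 2) : EuclideanSpace ℝ (Fin 2) →L[ℝ] ℝ).continuous
  fun_prop

lemma angFun_circlePt {a b m t : ℝ} (hm : m = (a+b)/2) (h2 : b - a ≤ π) (ht : t ∈ Icc a b) :
    angFun m (circlePt t) = t := by
  have e0 : (circlePt t 0 * Real.cos m + circlePt t 1 * Real.sin m) = Real.cos (t - m) := by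
    rw [circlePt_apply0, circlePt_apply1, Real.cos_sub]
  have e1 : (- circlePt t 0 * Real.sin m + circlePt t 1 * Real.cos m) = Real.sin (t - m) := by
    rw [circlePt_apply0, circlePt_apply1, Real.sin_sub]; ring
  have hrange : t - m ∈ Ioc (-π) π := by
    simp only [mem_Icc] at ht
    have hπ := Real.pi_pos
    constructor
    · rw [hm]; nlinarith [ht.1, ht.2]
    · rw [hm]; nlinarith [ht.1, ht.2]
  rw [angFun, e0, e1, Complex.ofReal_cos, Complex.ofReal_sin, Complex.arg_cos_add_sin_mul_I hrange]
  ring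

lemma map_arc {a b : ℝ} (hab : a ≤ b) (h2 : b - a ≤ π) :
    μH[(1:ℝ)].restrict (circleArc a b)
      = Measure.map circlePt (volume.restrict (Icc a b)) := by
  set m := (a+b)/2 with hm
  set μ : Measure (EuclideanSpace ℝ (Fin 2)) := μH[(1:ℝ)].restrict (circleArc a b) with hμ
  have hfin : IsFiniteMeasure μ := by
    constructor
    rw [hμ, Measure.restrict_apply_univ, measure_arc hab h2]
    exact ENNReal.ofReal_lt_top
  haveI := hfin
  set g := angFun m with hg
  set ρ : Measure ℝ := Measure.map g μ with hρ
  haveI : IsFiniteMeasure ρ := by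
    constructor
    rw [hρ, Measure.map_apply (measurable_angFun m) MeasurableSet.univ]
    exact measure_lt_top μ _
  haveI : IsFiniteMeasure (volume.restrict (Icc a b)) := by
    constructor
    rw [Measure.restrict_apply_univ, Real.volume_Icc]
    exact ENNReal.ofReal_lt_top
  have claim1 : ρ = volume.restrict (Icc a b) := by
    refine Measure.ext_of_Iic ρ _ fun c => ?_
    rw [hρ, Measure.map_apply (measurable_angFun m) measurableSet_Iic, hμ,
      Measure.restrict_apply (measurableSet_Iic.preimage (measurable_angFun m))]
    have hset : g ⁻¹' (Iic c) ∩ circleArc a b = circlePt '' Icc a (min b c) := by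
      ext x
      constructor
      · rintro ⟨hx1, t, ht, rfl⟩
        have hgt : g (circlePt t) = t := angFun_circlePt hm h2 ht
        refine ⟨t, ⟨ht.1, le_min ht.2 ?_⟩, rfl⟩
        simpa [hgt] using hx1
      · rintro ⟨t, ht, rfl⟩
        have ht' : t ∈ Icc a b := ⟨ht.1, ht.2.trans (min_le_left _ _)⟩
        refine ⟨?_, t, ht', rfl⟩
        have hgt : g (circlePt t) = t := angFun_circlePt hm h2 ht'
        simp only [mem_preimage, mem_Iic, hgt]
        exact ht.2.trans (min_le_right _ _)
    rw [hset, Measure.restrict_apply measurableSet_Iic]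
    have hset2 : Iic c ∩ Icc a b = Icc a (min b c) := by
      ext t; simp only [mem_inter_iff, mem_Iic, mem_Icc, le_min_iff]; tauto
    rw [hset2, Real.volume_Icc]
    rcases le_or_gt a (min b c) with hle | hlt
    · exact measure_arc (a := a) (b := min b c) hle (by have := min_le_left b c; linarith)
    · rw [Icc_eq_empty (not_le.2 hlt)]
      rw [Set.image_empty]
      rw [measure_empty, Eq.comm, ENNReal.ofReal_eq_zero]
      linarith
  have claim2 : Measure.map circlePt ρ = μ := by
    rw [hρ, Measure.map_map continuous_circlePt.measurable (measurable_angFun m)]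
    have hae : (circlePt ∘ g) =ᵐ[μ] id := by
      rw [hμ]
      filter_upwards [ae_restrict_mem (measurable_circleArc a b)] with x hx
      obtain ⟨t, ht, rfl⟩ := hx
      simp only [Function.comp_apply, id_eq, hg, angFun_circlePt hm h2 ht]
    rw [Measure.map_congr hae, Measure.map_id]
  rw [← claim2, claim1]



lemma circlePt_periodic (t : ℝ) (n : ℤ) : circlePt (t - n * (2*π)) = circlePt t := by
  rw [circlePt_def, circlePt_def, Real.cos_sub_int_mul_two_pi, Real.sin_sub_int_mul_two_pi]

lemma exists_angle {u : EuclideanSpace ℝ (Fin 2)} (hu : ‖u‖ = 1) : ∃ α, circlePt α = u := by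
  have hsum : u 0 ^ 2 + u 1 ^ 2 = 1 := by
    have := EuclideanSpace.norm_eq u
    rw [hu] at this
    have h2 : Real.sqrt (∑ i : Fin 2, ‖u i‖^2) = 1 := this.symm
    have h3 : (∑ i : Fin 2, ‖u i‖^2) = 1 := by
      have h4 : Real.sqrt (∑ i : Fin 2, ‖u i‖^2) ^ 2 = 1 := by rw [h2]; norm_num
      rwa [Real.sq_sqrt (by positivity : (0:ℝ) ≤ ∑ i : Fin 2, ‖u i‖^2)] at h4
    simpa [Fin.sum_univ_two, sq_abs] using h3
  have h0le : |u 0| ≤ 1 := by nlinarith [abs_nonneg (u 0), sq_abs (u 0), sq_nonneg (u 1)]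
  set α := if 0 ≤ u 1 then Real.arccos (u 0) else -Real.arccos (u 0) with hα
  have hcos : Real.cos α = u 0 := by
    rcases le_or_gt 0 (u 1) with h | h
    · rw [hα, if_pos h, Real.cos_arccos (by linarith [neg_abs_le (u 0)]) (by linarith [le_abs_self (u 0)])]
    · rw [hα, if_neg (not_le.2 h), Real.cos_neg, Real.cos_arccos (by linarith [neg_abs_le (u 0)]) (by linarith [le_abs_self (u 0)])]
  have hsin : Real.sin α = u 1 := by
    have hs : Real.sin (Real.arccos (u 0)) = Real.sqrt (1 - u 0 ^ 2) := Real.sin_arccos _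
    have hsq : Real.sqrt (1 - u 0 ^2) = |u 1| := by
      rw [show (1 : ℝ) - u 0 ^2 = u 1 ^2 by linarith, Real.sqrt_sq_eq_abs]
    rcases le_or_gt 0 (u 1) with h | h
    · rw [hα, if_pos h, hs, hsq, abs_of_nonneg h]
    · rw [hα, if_neg (not_le.2 h), Real.sin_neg, hs, hsq, abs_of_neg h]; ring
  refine ⟨α, ?_⟩
  rw [circlePt_def]
  ext i
  fin_cases i <;> simp [hcos, hsin]

lemma integral_arc {a b α : ℝ} (hab : a ≤ b) (h2 : b - a ≤ π) :
    ∫ θ in circleArc a b, ⟪θ, circlePt α⟫ ∂(μH[(1:ℝ)])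
      = Real.sin (b - α) - Real.sin (a - α) := by
  have hcont : Continuous fun x : EuclideanSpace ℝ (Fin 2) => ⟪x, circlePt α⟫ :=
    continuous_id.inner continuous_const
  rw [show (∫ θ in circleArc a b, ⟪θ, circlePt α⟫ ∂(μH[(1:ℝ)]))
      = ∫ θ, ⟪θ, circlePt α⟫ ∂(μH[(1:ℝ)].restrict (circleArc a b)) from rfl,
    map_arc hab h2,
    integral_map continuous_circlePt.aemeasurable hcont.aestronglyMeasurable]
  have : ∀ t, ⟪circlePt t, circlePt α⟫ = Real.cos (t - α) := fun t => inner_circlePt t α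
  simp_rw [this]
  rw [show (∫ t, Real.cos (t - α) ∂(volume.restrict (Icc a b)))
      = ∫ t in Icc a b, Real.cos (t - α) from rfl,
    MeasureTheory.integral_Icc_eq_integral_Ioc, ← intervalIntegral.integral_of_le hab,
    intervalIntegral.integral_comp_sub_right _ α]
  rw [integral_cos]


lemma key_ineq {a b α : ℝ} (hL1 : π/2 ≤ b - a) (hL2 : b - a ≤ π)
    (hca : 0 ≤ cos (α - a)) (hcb : 0 ≤ cos (α - b)) (hcm : 0 ≤ cos (α - (a+b)/2))
    (hx : α - (a+b)/2 ∈ Ioc (-π) π) :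
    1 ≤ sin (b - α) - sin (a - α) ∧
    (sin (b - α) - sin (a - α) = 1 ↔ (b - a = π/2 ∧ (α = a ∨ α = b))) := by
  have hπ := Real.pi_pos
  set m := (a+b)/2 with hm
  set L := b - a with hL
  set x := α - m with hxdef
  have hba : b - α = L/2 - x := by rw [hxdef, hm, hL]; ring
  have haα : a - α = -(L/2 + x) := by rw [hxdef, hm, hL]; ring
  have hαa : α - a = x + L/2 := by rw [hxdef, hm, hL]; ring
  have hαb : α - b = x - L/2 := by rw [hxdef, hm, hL]; ring
  set s := Real.sin (L/2) with hs
  set c := Real.cos x with hc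
  have hE : sin (b - α) - sin (a - α) = 2 * s * c := by
    rw [hba, haα, sin_neg, Real.sin_sub, Real.sin_add]; ring
  -- |x| ≤ π/2
  have hx2 : |x| ≤ π/2 := by
    rw [abs_le]
    constructor
    · by_contra h
      push_neg at h
      have : Real.cos (-x) < 0 :=
        Real.cos_neg_of_pi_div_two_lt_of_lt (by linarith) (by linarith [hx.1])
      rw [Real.cos_neg] at this
      linarith
    · by_contra h
      push_neg at h
      have : Real.cos x < 0 :=
        Real.cos_neg_of_pi_div_two_lt_of_lt (by linarith) (by linarith [hx.2])
      linarith
  have habs := abs_le.1 hx2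
  -- x ≤ π/2 - L/2
  have hxu : x ≤ π/2 - L/2 := by
    by_contra h
    push_neg at h
    have : Real.cos (x + L/2) < 0 :=
      Real.cos_neg_of_pi_div_two_lt_of_lt (by linarith) (by linarith)
    rw [← hαa] at this
    linarith
  have hxl : -(π/2 - L/2) ≤ x := by
    by_contra h
    push_neg at h
    have : Real.cos (L/2 - x) < 0 :=
      Real.cos_neg_of_pi_div_two_lt_of_lt (by linarith) (by linarith)
    rw [show L/2 - x = -(x - L/2) by ring, Real.cos_neg, ← hαb] at this
    linarith
  have habs2 : |x| ≤ π/2 - L/2 := abs_le.2 ⟨hxl, hxu⟩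
  -- c ≥ s
  have hcs : s ≤ c := by
    have h1 : Real.cos (π/2 - L/2) ≤ Real.cos |x| :=
      Real.cos_le_cos_of_nonneg_of_le_pi (abs_nonneg x) (by linarith) habs2
    rw [Real.cos_pi_div_two_sub] at h1
    rw [hc, ← Real.cos_abs]
    exact h1
  -- s ≥ √2/2
  have hs1 : Real.sqrt 2 / 2 ≤ s := by
    rw [hs, ← Real.sin_pi_div_four]
    exact Real.sin_le_sin_of_le_of_le_pi_div_two (by linarith) (by linarith) (by linarith)
  have hs0 : 0 < s := lt_of_lt_of_le (by positivity) hs1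
  have hcL : Real.cos L = 1 - 2 * s^2 := by
    have := Real.cos_add (L/2) (L/2)
    have h2 := Real.sin_sq_add_cos_sq (L/2)
    rw [show L/2 + L/2 = L by ring] at this
    rw [this, hs]; nlinarith
  have hcL0 : Real.cos L ≤ 0 :=
    Real.cos_nonpos_of_pi_div_two_le_of_le hL1 (by linarith)
  have hineq : 1 ≤ 2 * s * c := by
    have h2s : 2 * s * s ≤ 2 * s * c := by nlinarith [hs0, hcs]
    nlinarith [hcL, hcL0]
  rw [hE]
  refine ⟨hineq, ?_, ?_⟩
  · intro heq
    have hc1 : c ≤ 1 := Real.cos_le_one x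
    have hs2 : s ≤ Real.sqrt 2 / 2 := by
      nlinarith [heq, hcs, hs0, Real.sq_sqrt (by norm_num : (0:ℝ) ≤ 2), Real.sqrt_nonneg 2]
    have hseq : s = Real.sqrt 2 / 2 := le_antisymm hs2 hs1
    have hL4 : L = π/2 := by
      have h14 : L/2 = π/4 := by
        refine Real.strictMonoOn_sin.injOn ?_ ?_ ?_
        · exact ⟨by linarith, by linarith⟩
        · exact ⟨by linarith, by linarith⟩
        · rw [← hs, hseq, Real.sin_pi_div_four]
      linarith
    refine ⟨hL4, ?_⟩
    have hceq : c = Real.sqrt 2 / 2 := by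
      have h2 : Real.sqrt 2 > 0 := by positivity
      nlinarith [heq, hseq, Real.sq_sqrt (by norm_num : (0:ℝ) ≤ 2)]
    have hxabs : |x| = π/4 := by
      refine Real.injOn_cos ⟨abs_nonneg x, by linarith⟩ ⟨by linarith, by linarith⟩ ?_
      rw [Real.cos_abs, ← hc, hceq, Real.cos_pi_div_four]
    rcases abs_eq (by linarith : (0:ℝ) ≤ π/4) |>.1 hxabs with h | h
    · right
      rw [hxdef] at h; rw [hm] at h; rw [hL4] at *; linarith
    · left
      rw [hxdef] at h; rw [hm] at h; rw [hL4] at *; linarith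
  · rintro ⟨hL4, hαab⟩
    have hseq : s = Real.sqrt 2 / 2 := by rw [hs, hL4, show π/2/2 = π/4 by ring, Real.sin_pi_div_four]
    have hceq : c = Real.sqrt 2 / 2 := by
      rcases hαab with rfl | rfl
      · rw [hc, hxdef, hm, show α - (α+b)/2 = -((b - α)/2) by ring, ← hL, hL4, Real.cos_neg,
          show π/2/2 = π/4 by ring, Real.cos_pi_div_four]
      · rw [hc, hxdef, hm, show α - (a+α)/2 = (α - a)/2 by ring]
        rw [show α - a = L by rw [hL], hL4, show π/2/2 = π/4 by ring, Real.cos_pi_div_four]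
    rw [hseq, hceq]
    nlinarith [Real.sq_sqrt (by norm_num : (0:ℝ) ≤ 2)]


section main
variable {a b : ℝ} {u : EuclideanSpace ℝ (Fin 2)}

lemma setup (hL : b - a ∈ Icc (π/2) π) (hu : u ∈ Metric.sphere (0 : EuclideanSpace ℝ (Fin 2)) 1)
    (hdual : ∀ x ∈ circleArc a b, 0 ≤ ⟪u, x⟫) :
    ∃ α, circlePt α = u ∧ α - (a+b)/2 ∈ Ioc (-π) π ∧
      0 ≤ cos (α - a) ∧ 0 ≤ cos (α - b) ∧ 0 ≤ cos (α - (a+b)/2) ∧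
      PhiArc (circleArc a b) u = 1/π * (sin (b - α) - sin (a - α)) := by
  have hπ := Real.pi_pos
  obtain ⟨hL1, hL2⟩ := hL
  have hab : a ≤ b := by linarith
  obtain ⟨α₀, hα₀⟩ := exists_angle (mem_sphere_zero_iff_norm.1 hu)
  set m := (a+b)/2 with hm
  set α := toIocMod Real.two_pi_pos (m - π) α₀ with hα
  have hper : circlePt α = u := by
    have : α = α₀ - toIocDiv Real.two_pi_pos (m - π) α₀ * (2*π) := by
      rw [hα, toIocMod]
      push_cast [zsmul_eq_mul]
      ring
    rw [this, circlePt_periodic, hα₀]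
  have hmem : α ∈ Ioc (m - π) (m + π) := by
    have := toIocMod_mem_Ioc Real.two_pi_pos (m - π) α₀
    rwa [show m - π + 2*π = m + π by ring] at this
  have hxmem : α - m ∈ Ioc (-π) π := ⟨by linarith [hmem.1], by linarith [hmem.2]⟩
  have hconstraint : ∀ t ∈ Icc a b, 0 ≤ Real.cos (α - t) := by
    intro t ht
    have := hdual (circlePt t) ⟨t, ht, rfl⟩
    rwa [← hper, inner_circlePt] at this
  refine ⟨α, hper, hxmem, hconstraint a ⟨le_refl a, hab⟩, hconstraint b ⟨hab, le_refl b⟩,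
    hconstraint m ⟨by rw [hm]; linarith, by rw [hm]; linarith⟩, ?_⟩
  rw [PhiArc, ← hper, integral_arc hab hL2]
end main

theorem arc_phi_min :
    (∀ ϑ₁ ϑ₂ : ℝ, ϑ₂ - ϑ₁ ∈ Icc (Real.pi / 2) Real.pi →
      ∀ u ∈ Metric.sphere (0 : EuclideanSpace ℝ (Fin 2)) 1,
        (∀ x ∈ circleArc ϑ₁ ϑ₂, 0 ≤ ⟪u, x⟫) →
        1 / Real.pi ≤ PhiArc (circleArc ϑ₁ ϑ₂) u) ∧
    (∀ ϑ₁ ϑ₂ : ℝ, ϑ₂ - ϑ₁ ∈ Icc (Real.pi / 2) Real.pi →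
      ∀ u ∈ Metric.sphere (0 : EuclideanSpace ℝ (Fin 2)) 1,
        (∀ x ∈ circleArc ϑ₁ ϑ₂, 0 ≤ ⟪u, x⟫) →
        (PhiArc (circleArc ϑ₁ ϑ₂) u = 1 / Real.pi ↔
          ϑ₂ - ϑ₁ = Real.pi / 2 ∧ (u = circlePt ϑ₁ ∨ u = circlePt ϑ₂))) := by
  have hπ := Real.pi_pos
  constructor
  · intro a b hL u hu hdual
    obtain ⟨α, hper, hx, hca, hcb, hcm, hΦ⟩ := setup hL hu hdual
    have hk := (key_ineq hL.1 hL.2 hca hcb hcm hx).1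
    rw [hΦ]
    nlinarith [one_div_pos.2 hπ]
  · intro a b hL u hu hdual
    have hab : a ≤ b := by have := hL.1; linarith
    obtain ⟨α, hper, hx, hca, hcb, hcm, hΦ⟩ := setup hL hu hdual
    obtain ⟨hk1, hk2⟩ := key_ineq hL.1 hL.2 hca hcb hcm hx
    constructor
    · intro h
      rw [hΦ] at h
      have hne : (1/π : ℝ) ≠ 0 := by positivity
      have hE : Real.sin (b - α) - Real.sin (a - α) = 1 :=
        mul_left_cancel₀ hne (h.trans (mul_one (1/π)).symm)
      obtain ⟨h1, h2⟩ := hk2.1 hE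
      exact ⟨h1, h2.imp (fun ha => by rw [← hper, ha]) (fun hb => by rw [← hper, hb])⟩
    · rintro ⟨h1, h2 | h2⟩
      · rw [PhiArc, h2, integral_arc hab hL.2 (α := a), sub_self, Real.sin_zero,
          show b - a = π/2 from h1, Real.sin_pi_div_two]
        ring
      · rw [PhiArc, h2, integral_arc hab hL.2 (α := b), sub_self, Real.sin_zero,
          show a - b = -(π/2) by linarith, Real.sin_neg, Real.sin_pi_div_two]
        ring
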